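/- ∑_{k=0}^{n} C(n,k)²·2^k = ∑_{k=0}^{n} C(n+k,2k)·C(2k,k) for all n ≥ 0. -/

import Mathlib

open Finset

lemma aux_inner (n i : ℕ) (hi : i ≤ n) :
    ∑ k ∈ range (n + 1), n.choose k * k.choose i = n.choose i * 2 ^ (n - i) := by
  have h1 : ∑ k ∈ range (n + 1), n.choose k * k.choose i
      = ∑ k ∈ Ico i (n + 1), n.choose k * k.choose i := by
    rw [range_eq_Ico]
    refine (Finset.sum_subset (Finset.Ico_subset_Ico (Nat.zero_le _) le_rfl) ?_).symm
    intro x hx hx'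
    simp only [mem_Ico] at hx hx'
    have : x < i := by omega
    rw [Nat.choose_eq_zero_of_lt this, Nat.mul_zero]
  rw [h1, Finset.sum_Ico_eq_sum_range]
  have h2 : n + 1 - i = n - i + 1 := by omega
  rw [h2]
  have h3 : ∀ t ∈ range (n - i + 1),
      n.choose (i + t) * (i + t).choose i = n.choose i * (n - i).choose t := by
    intro t ht
    simp only [mem_range] at ht
    have h4 : i + t ≤ n := by omega
    have := Nat.choose_mul (n := n) (Nat.le_add_right i t)
    rw [this, Nat.add_sub_cancel_left]
  rw [Finset.sum_congr rfl h3, ← Finset.mul_sum, Nat.sum_range_choose]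

theorem schroeder_identity_m_one (n : ℕ) :
    ∑ k ∈ Finset.range (n + 1), n.choose k ^ 2 * 2 ^ k =
      ∑ k ∈ Finset.range (n + 1), (n + k).choose (2 * k) * (2 * k).choose k := by
  -- rewrite RHS terms
  have hterm : ∀ k ∈ range (n + 1),
      (n + k).choose (2 * k) * (2 * k).choose k = (n + k).choose k * n.choose k := by
    intro k hk
    simp only [mem_range] at hk
    have h1 : 2 * k ≤ n + k := by omega
    have h2 : k ≤ 2 * k := by omega
    rw [Nat.choose_mul (n := n + k) h2]
    congr 2 <;> omega
  rw [Finset.sum_congr rfl hterm]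
  -- Vandermonde on (n+k).choose k
  have hvan : ∀ k ∈ range (n + 1),
      (n + k).choose k * n.choose k
        = ∑ i ∈ range (n + 1), n.choose i * (n.choose k * k.choose i) := by
    intro k hk
    simp only [mem_range] at hk
    rw [Nat.add_choose_eq, Finset.Nat.sum_antidiagonal_eq_sum_range_succ_mk]
    rw [Finset.sum_mul]
    have hext : ∑ i ∈ range (k + 1), n.choose i * k.choose (k - i) * n.choose k
        = ∑ i ∈ range (n + 1), n.choose i * (n.choose k * k.choose i) := by
      rw [← Finset.sum_subset (Finset.range_subset_range.mpr (by omega : k + 1 ≤ n + 1))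
        (fun x hx hx' => ?_)]
      · refine Finset.sum_congr rfl fun i hi => ?_
        simp only [mem_range] at hi
        rw [Nat.choose_symm (by omega : i ≤ k)]; ring
      · simp only [mem_range] at hx hx'
        rw [Nat.choose_eq_zero_of_lt (by omega : k < x), Nat.mul_zero, Nat.mul_zero]
    exact hext
  rw [Finset.sum_congr rfl hvan, Finset.sum_comm]
  have hswap : ∀ i ∈ range (n + 1),
      ∑ k ∈ range (n + 1), n.choose i * (n.choose k * k.choose i)
        = n.choose i ^ 2 * 2 ^ (n - i) := by
    intro i hi
    simp only [mem_range] at hi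
    rw [← Finset.mul_sum, aux_inner n i (by omega)]
    ring
  rw [Finset.sum_congr rfl hswap]
  -- reflect LHS
  rw [← Finset.sum_range_reflect (fun k => n.choose k ^ 2 * 2 ^ k) (n + 1)]
  refine Finset.sum_congr rfl fun j hj => ?_
  simp only [mem_range] at hj
  have : n + 1 - 1 - j = n - j := by omega
  rw [this, Nat.choose_symm (by omega : j ≤ n)]
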